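/- Define p_m = exp(m^{−1} Σ_{j=1}^{m} log j) (so p_m ~ m/e as m → ∞). For every Δ ∈ (0, 1/(2e)) and every C > 1 there exist ε ∈ (0, 0.1) and κ̄ ∈ (0, 1/4) such that for every fixed κ ∈ (0, κ̄] there is an integer m₀ with: for all m ≥ m₀, inf_{γ ∈ [1, C]} m^{−1} Σ_{j=⌊κm⌋}^{m} (j/p_m)^{γ} ≥ 1 + 2ε. -/

import Mathlib

/-- Geometric mean of `1, …, m`: `p_m = exp(m⁻¹ ∑_{j=1}^m log j)` (so `p_m ~ m/e`). -/
noncomputable def pm (m : ℕ) : ℝ :=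
  Real.exp ((m : ℝ)⁻¹ * ∑ j ∈ Finset.Icc 1 m, Real.log j)

open Real Filter

lemma sum_log_ge : ∀ m : ℕ, 1 ≤ m →
    (m:ℝ) * Real.log m - m ≤ ∑ j ∈ Finset.Icc 1 m, Real.log j := by
  intro m
  induction m with
  | zero => omega
  | succ n ih =>
    intro _
    rcases Nat.eq_zero_or_pos n with h | h
    · subst h; simp
    · have hS := ih h
      rw [Finset.sum_Icc_succ_top (by omega)]
      have hn : (0:ℝ) < n := by positivity
      have hkey : Real.log ((n+1:ℝ)/n) ≤ (n+1:ℝ)/n - 1 :=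
        Real.log_le_sub_one_of_pos (by positivity)
      rw [Real.log_div (by positivity) (by positivity)] at hkey
      have h2 : (n+1:ℝ)/n - 1 = 1/n := by field_simp; ring
      rw [h2] at hkey
      have h3 : (n:ℝ) * (Real.log (n+1) - Real.log n) ≤ 1 := by
        have h5 := mul_le_mul_of_nonneg_left hkey hn.le
        rw [mul_one_div, div_self hn.ne'] at h5
        exact h5
      push_cast
      nlinarith [h3]

lemma sum_log_le : ∀ m : ℕ,
    ∑ j ∈ Finset.Icc 1 m, Real.log j ≤ ((m:ℝ)+1) * Real.log ((m:ℝ)+1) - m := by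
  intro m
  induction m with
  | zero => simp
  | succ n ih =>
    rw [Finset.sum_Icc_succ_top (by omega)]
    have hn1 : (0:ℝ) < (n:ℝ)+1 := by positivity
    have hkey : 1 - ((n:ℝ)+2)⁻¹ * ((n:ℝ)+1) ≤ Real.log (((n:ℝ)+2)/((n:ℝ)+1)) := by
      have := Real.one_sub_inv_le_log_of_pos (x := ((n:ℝ)+2)/((n:ℝ)+1)) (by positivity)
      have h2 : (((n:ℝ)+2)/((n:ℝ)+1))⁻¹ = ((n:ℝ)+2)⁻¹ * ((n:ℝ)+1) := by
        field_simp
      rwa [h2] at this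
    rw [Real.log_div (by positivity) (by positivity)] at hkey
    have h3 : 1 ≤ ((n:ℝ)+2) * (Real.log ((n:ℝ)+2) - Real.log ((n:ℝ)+1)) := by
      have hpos : (0:ℝ) < (n:ℝ)+2 := by positivity
      have h4 : 1 - ((n:ℝ)+2)⁻¹ * ((n:ℝ)+1) = (((n:ℝ)+2) - ((n:ℝ)+1))/((n:ℝ)+2) := by
        field_simp
      rw [h4, div_le_iff₀ hpos] at hkey
      nlinarith [hkey]
    push_cast
    have e : ((n:ℝ) + 1 + 1) = ((n:ℝ)+2) := by ring
    rw [e]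
    nlinarith [h3, ih]

lemma sum_Icc_cast_ge (a : ℕ) : ∀ m : ℕ, a ≤ m →
    ((m:ℝ)^2 - (a:ℝ)^2)/2 ≤ ∑ j ∈ Finset.Icc a m, (j:ℝ) := by
  intro m
  induction m with
  | zero => intro h; interval_cases a; simp
  | succ n ih =>
    intro h
    rcases Nat.lt_or_ge n a with h' | h'
    · have ha : a = n+1 := by omega
      subst ha; simp; positivity
    · rw [Finset.sum_Icc_succ_top (by omega)]
      have := ih h'
      push_cast
      nlinarith [this]

lemma pm_lower {m : ℕ} (hm : 1 ≤ m) : (m:ℝ) * Real.exp (-1) ≤ pm m := by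
  have hm0 : (0:ℝ) < m := by exact_mod_cast hm
  have h := sum_log_ge m hm
  have h1 : Real.log m + (-1) ≤ (m:ℝ)⁻¹ * ∑ j ∈ Finset.Icc 1 m, Real.log j := by
    rw [le_inv_mul_iff₀ hm0]
    nlinarith [h]
  have h2 : (m:ℝ) * Real.exp (-1) = Real.exp (Real.log m + (-1)) := by
    rw [Real.exp_add, Real.exp_log hm0]
  rw [h2]
  exact Real.exp_le_exp.mpr h1

lemma pm_upper {m : ℕ} (hm : 1 ≤ m)
    (hg : ((m:ℝ)+1) * Real.log ((m:ℝ)+1) / m - Real.log m ≤ 1 + Real.log (3/8)) :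
    pm m ≤ 3/8 * m := by
  have hm0 : (0:ℝ) < m := by exact_mod_cast hm
  have hS := sum_log_le m
  have h1 : (m:ℝ)⁻¹ * ∑ j ∈ Finset.Icc 1 m, Real.log j ≤ Real.log (3/8 * m) := by
    rw [inv_mul_le_iff₀ hm0, Real.log_mul (by norm_num) hm0.ne']
    have h3 := mul_le_mul_of_nonneg_left hg hm0.le
    have e : (m:ℝ) * (((m:ℝ)+1) * Real.log ((m:ℝ)+1) / m - Real.log m)
        = ((m:ℝ)+1) * Real.log ((m:ℝ)+1) - (m:ℝ) * Real.log m := by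
      field_simp
    rw [e] at h3
    nlinarith [hS]
  calc pm m ≤ Real.exp (Real.log (3/8 * m)) := Real.exp_le_exp.mpr h1
  _ = 3/8 * m := Real.exp_log (by positivity)

lemma g_tendsto : Tendsto (fun m : ℕ => ((m:ℝ)+1) * Real.log ((m:ℝ)+1) / m - Real.log m)
    atTop (nhds 0) := by
  have hN : Tendsto (fun m : ℕ => (m:ℝ)) atTop atTop := tendsto_natCast_atTop_atTop
  have hA : Tendsto (fun m : ℕ => 1 + (m:ℝ)⁻¹) atTop (nhds 1) := by
    have h2 : Tendsto (fun m : ℕ => (m:ℝ)⁻¹) atTop (nhds 0) := tendsto_inv_atTop_zero.comp hN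
    simpa using (tendsto_const_nhds (x := (1:ℝ)) (f := (atTop : Filter ℕ))).add h2
  have t1 : Tendsto (fun m : ℕ => Real.log ((m:ℝ)+1) - Real.log m) atTop (nhds 0) := by
    have := (Real.continuousAt_log one_ne_zero).tendsto.comp hA
    rw [Real.log_one] at this
    refine this.congr' ?_
    filter_upwards [eventually_ge_atTop 1] with m hm
    have hm0 : (0:ℝ) < m := by exact_mod_cast hm
    have : (1 + (m:ℝ)⁻¹) = ((m:ℝ)+1)/m := by field_simp
    simp only [Function.comp]
    rw [this, Real.log_div (by positivity) hm0.ne']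
  have hB : Tendsto (fun m : ℕ => (m:ℝ)+1) atTop atTop :=
    tendsto_atTop_add_const_right atTop 1 hN
  have hlog : Tendsto (fun x : ℝ => Real.log x / x) atTop (nhds 0) :=
    Real.isLittleO_log_id_atTop.tendsto_div_nhds_zero
  have t2 : Tendsto (fun m : ℕ => Real.log ((m:ℝ)+1) / m) atTop (nhds 0) := by
    have hprod := (hlog.comp hB).mul hA
    rw [zero_mul] at hprod
    refine hprod.congr' ?_
    filter_upwards [eventually_ge_atTop 1] with m hm
    have hm0 : (0:ℝ) < m := by exact_mod_cast hm
    have hm1 : (0:ℝ) < (m:ℝ)+1 := by positivity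
    simp only [Function.comp]
    field_simp
  have := t1.add t2
  rw [add_zero] at this
  refine this.congr' ?_
  filter_upwards [eventually_ge_atTop 1] with m hm
  have hm0 : (0:ℝ) < m := by exact_mod_cast hm
  field_simp
  ring

/-- Lemma 5.5(b): for `Δ ∈ (0, 1/(2e))` and `C > 1` there are `ε ∈ (0, 0.1)` and
`κ̄ ∈ (0, 1/4)` such that for every `κ ∈ (0, κ̄]` and all large `m`,
`inf_{γ ∈ [1, C]} m⁻¹ ∑_{j=⌊κm⌋}^m (j/p_m)^γ ≥ 1 + 2ε`. -/
theorem power_sum_lower_bound_positive_exponents (Δ C : ℝ)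
    (hΔ : Δ ∈ Set.Ioo (0 : ℝ) (1 / (2 * Real.exp 1))) (hC : 1 < C) :
    ∃ ε ∈ Set.Ioo (0 : ℝ) 0.1, ∃ κb ∈ Set.Ioo (0 : ℝ) (1/4),
      ∀ κ ∈ Set.Ioc (0 : ℝ) κb, ∃ m₀ : ℕ, ∀ m : ℕ, m₀ ≤ m →
        ∀ γ ∈ Set.Icc (1 : ℝ) C,
          1 + 2 * ε ≤ (m : ℝ)⁻¹ * ∑ j ∈ Finset.Icc ⌊κ * m⌋₊ m, ((j : ℝ) / pm m) ^ γ := by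
  refine ⟨1/40, by norm_num, 1/8, by norm_num, ?_⟩
  intro κ hκ
  have hc : (0:ℝ) < 1 + Real.log (3/8) := by
    have h8 : (8:ℝ)/3 < Real.exp 1 := lt_trans (by norm_num) Real.exp_one_gt_d9
    have h9 : Real.exp (-1) < 3/8 := by
      rw [Real.exp_neg, inv_lt_comm₀ (Real.exp_pos 1) (by norm_num)]
      linarith
    have := (Real.lt_log_iff_exp_lt (by norm_num : (0:ℝ) < 3/8)).2 h9
    linarith
  have hev : ∀ᶠ m : ℕ in atTop,
      (((m:ℝ)+1) * Real.log ((m:ℝ)+1) / m - Real.log m ≤ 1 + Real.log (3/8)) ∧ 1000 ≤ m :=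
    ((g_tendsto.eventually_lt_const hc).mono fun m h => h.le).and (eventually_ge_atTop 1000)
  obtain ⟨M, hM⟩ := eventually_atTop.mp hev
  refine ⟨M, ?_⟩
  intro m hm γ hγ
  obtain ⟨hgm, hm1000⟩ := hM m hm
  have hm1 : 1 ≤ m := by omega
  have hm0 : (0:ℝ) < m := by exact_mod_cast hm1
  have hmR : (1000:ℝ) ≤ m := by exact_mod_cast hm1000
  set P := pm m with hPdef
  have hP0 : 0 < P := Real.exp_pos _
  have hPu : P ≤ 3/8 * m := pm_upper hm1 hgm
  have hPl : (m:ℝ) * Real.exp (-1) ≤ P := pm_lower hm1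
  set a := ⌈P⌉₊ with hadef
  have haP : P ≤ (a:ℝ) := Nat.le_ceil P
  have haP1 : (a:ℝ) ≤ P + 1 := (Nat.ceil_lt_add_one hP0.le).le
  have ham : a ≤ m := Nat.ceil_le.mpr (hPu.trans (by nlinarith))
  have hfloor : ⌊κ * m⌋₊ ≤ a := by
    refine le_trans (Nat.floor_le_floor ?_) (Nat.floor_le_ceil P)
    have hexp : (1/8:ℝ) ≤ Real.exp (-1) := by
      rw [Real.exp_neg, le_inv_comm₀ (by norm_num) (Real.exp_pos 1)]
      linarith [Real.exp_one_lt_d9]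
    nlinarith [hκ.1.le, hκ.2, hm0.le]
  have h1 : ∑ j ∈ Finset.Icc a m, ((j:ℝ)/P)^γ
      ≤ ∑ j ∈ Finset.Icc ⌊κ * m⌋₊ m, ((j:ℝ)/P)^γ :=
    Finset.sum_le_sum_of_subset_of_nonneg (Finset.Icc_subset_Icc_left hfloor)
      (fun j _ _ => Real.rpow_nonneg (by positivity) γ)
  have h2 : ∑ j ∈ Finset.Icc a m, (j:ℝ)/P ≤ ∑ j ∈ Finset.Icc a m, ((j:ℝ)/P)^γ := by
    refine Finset.sum_le_sum fun j hj => ?_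
    have hja : (a:ℝ) ≤ (j:ℝ) := by exact_mod_cast (Finset.mem_Icc.mp hj).1
    have hj1 : 1 ≤ (j:ℝ)/P := by rw [le_div_iff₀ hP0]; linarith
    calc (j:ℝ)/P = ((j:ℝ)/P) ^ (1:ℝ) := (Real.rpow_one _).symm
    _ ≤ ((j:ℝ)/P)^γ := Real.rpow_le_rpow_of_exponent_le hj1 hγ.1
  have h3 : ((m:ℝ)^2 - (a:ℝ)^2)/2 ≤ ∑ j ∈ Finset.Icc a m, (j:ℝ) := sum_Icc_cast_ge a m ham
  have key : 1 + 2 * (1/40 : ℝ) ≤ (m:ℝ)⁻¹ * ((((m:ℝ)^2 - (a:ℝ)^2)/2)/P) := by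
    rw [le_inv_mul_iff₀ hm0, le_div_iff₀ hP0]
    nlinarith [hP0.le, haP1, hPu, hmR, (by positivity : (0:ℝ) ≤ (a:ℝ)), sq_nonneg ((a:ℝ) - P - 1),
      mul_le_mul_of_nonneg_left hPu hm0.le]
  calc 1 + 2 * (1/40 : ℝ)
      ≤ (m:ℝ)⁻¹ * ((((m:ℝ)^2 - (a:ℝ)^2)/2)/P) := key
    _ ≤ (m:ℝ)⁻¹ * ((∑ j ∈ Finset.Icc a m, (j:ℝ))/P) := by gcongr
    _ = (m:ℝ)⁻¹ * (∑ j ∈ Finset.Icc a m, (j:ℝ)/P) := by rw [Finset.sum_div]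
    _ ≤ (m:ℝ)⁻¹ * (∑ j ∈ Finset.Icc a m, ((j:ℝ)/P)^γ) :=
        mul_le_mul_of_nonneg_left h2 (inv_nonneg.mpr hm0.le)
    _ ≤ (m:ℝ)⁻¹ * ∑ j ∈ Finset.Icc ⌊κ * m⌋₊ m, ((j:ℝ)/P)^γ :=
        mul_le_mul_of_nonneg_left h1 (inv_nonneg.mpr hm0.le)
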